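/- For every matrix (a b; c d) ∈ SL(2,ℤ) congruent to the identity matrix modulo 2 and every τ in the complex upper half plane, one has ϑ[0,0]((aτ+b)/(cτ+d))⁴ = (cτ+d)² · ϑ[0,0](τ)⁴; that is, ϑ[0,0]⁴ is a modular form of weight 2 with trivial multiplier on the principal congruence subgroup Γ(2). -/

import Mathlib

open Complex

/-- The genus one theta nullwert `ϑ[0,0](τ) = Σ_{n∈ℤ} exp(πiτn²)`. -/
noncomputable def theta00 (τ : ℂ) : ℂ :=
  ∑' n : ℤ, Complex.exp ((Real.pi : ℂ) * Complex.I * τ * (n : ℂ) ^ 2)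


lemma denom_ne (c d : ℤ) (h : c ≠ 0 ∨ d ≠ 0) (τ : ℂ) (hτ : 0 < τ.im) :
    (c : ℂ) * τ + d ≠ 0 := by
  intro h0
  have him := congrArg Complex.im h0
  have hre := congrArg Complex.re h0
  simp [Complex.add_im, Complex.mul_im, Complex.add_re, Complex.mul_re] at him hre
  rcases him with hc0 | him0
  · rw [hc0] at hre
    simp at hre
    rcases h with hc | hd
    · exact hc (by exact_mod_cast hc0)
    · exact hd hre
  · exact absurd him0 (ne_of_gt hτ)

lemma im_moebius (a b c d : ℤ) (h : a * d - b * c = 1) (τ : ℂ) (hτ : 0 < τ.im) :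
    0 < (((a:ℂ) * τ + b) / ((c:ℂ) * τ + d)).im := by
  have hcd : (c:ℂ) * τ + d ≠ 0 := by
    apply denom_ne c d ?_ τ hτ
    by_contra hx
    push_neg at hx
    simp [hx.1, hx.2] at h
  rw [Complex.div_im]
  have hns : 0 < Complex.normSq ((c:ℂ)*τ+d) := by
    simpa [Complex.normSq_pos] using hcd
  have key : ((a:ℂ)*τ+b).im * ((c:ℂ)*τ+d).re - ((a:ℂ)*τ+b).re * ((c:ℂ)*τ+d).im = τ.im := by
    simp [Complex.add_im, Complex.add_re, Complex.mul_re, Complex.mul_im]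
    have : (a:ℝ) * d - b * c = 1 := by exact_mod_cast congrArg (Int.cast : ℤ → ℝ) h
    nlinarith [this]
  rw [div_sub_div_same, key]
  positivity


lemma S4 (τ : ℂ) (hτ : 0 < τ.im) :
    jacobiTheta (-1 / τ) ^ 4 = -τ ^ 2 * jacobiTheta τ ^ 4 := by
  have h := jacobiTheta_S_smul ⟨τ, hτ⟩
  rw [UpperHalfPlane.modular_S_smul] at h
  have h2 : jacobiTheta ((-τ)⁻¹) = (-Complex.I * τ) ^ (1/2:ℂ) * jacobiTheta τ := h
  rw [show (-1/τ : ℂ) = (-τ)⁻¹ by ring]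
  have h4 : jacobiTheta ((-τ)⁻¹) ^ 4 = ((-Complex.I * τ) ^ (1 / 2 : ℂ)) ^ 4 * jacobiTheta τ ^ 4 := by
    rw [h2]; ring
  rw [h4, ← Complex.cpow_nat_mul]
  norm_num
  rw [mul_pow, Complex.I_sq]
  ring


def Pmod (a b c d : ℤ) : Prop := ∀ τ : ℂ, 0 < τ.im →
  jacobiTheta (((a:ℂ)*τ+b)/((c:ℂ)*τ+d))^4 = ((c:ℂ)*τ+d)^2 * jacobiTheta τ^4

lemma det_nz {a b c d : ℤ} (h : a*d - b*c = 1) : c ≠ 0 ∨ d ≠ 0 := by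
  by_contra hx; push_neg at hx; rw [hx.1, hx.2] at h; omega

lemma Pmul {a₁ b₁ c₁ d₁ a₂ b₂ c₂ d₂ : ℤ} (h₁ : a₁*d₁-b₁*c₁=1) (h₂ : a₂*d₂-b₂*c₂=1)
    (P₁ : Pmod a₁ b₁ c₁ d₁) (P₂ : Pmod a₂ b₂ c₂ d₂) :
    Pmod (a₁*a₂+b₁*c₂) (a₁*b₂+b₁*d₂) (c₁*a₂+d₁*c₂) (c₁*b₂+d₁*d₂) := by
  intro τ hτ
  set σ : ℂ := ((a₂:ℂ)*τ+b₂)/((c₂:ℂ)*τ+d₂) with hσdef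
  have hσ : 0 < σ.im := im_moebius a₂ b₂ c₂ d₂ h₂ τ hτ
  have hden₂ : (c₂:ℂ)*τ+d₂ ≠ 0 := denom_ne c₂ d₂ (det_nz h₂) τ hτ
  have hden₁ : (c₁:ℂ)*σ+d₁ ≠ 0 := denom_ne c₁ d₁ (det_nz h₁) σ hσ
  have hj : (c₁:ℂ)*σ + d₁
      = (((c₁*a₂+d₁*c₂ : ℤ):ℂ)*τ + ((c₁*b₂+d₁*d₂:ℤ):ℂ)) / ((c₂:ℂ)*τ+d₂) := by
    rw [hσdef, eq_div_iff hden₂]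
    rw [add_mul, mul_assoc, div_mul_cancel₀ _ hden₂]
    push_cast
    ring
  have hnum : (a₁:ℂ)*σ + b₁
      = (((a₁*a₂+b₁*c₂ : ℤ):ℂ)*τ + ((a₁*b₂+b₁*d₂:ℤ):ℂ)) / ((c₂:ℂ)*τ+d₂) := by
    rw [hσdef, eq_div_iff hden₂]
    rw [add_mul, mul_assoc, div_mul_cancel₀ _ hden₂]
    push_cast
    ring
  have harg : (((a₁*a₂+b₁*c₂ : ℤ):ℂ)*τ + ((a₁*b₂+b₁*d₂:ℤ):ℂ)) / (((c₁*a₂+d₁*c₂ : ℤ):ℂ)*τ + ((c₁*b₂+d₁*d₂:ℤ):ℂ))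
      = ((a₁:ℂ)*σ + b₁) / ((c₁:ℂ)*σ + d₁) := by
    have hden₃ : ((c₁*a₂+d₁*c₂ : ℤ):ℂ)*τ + ((c₁*b₂+d₁*d₂:ℤ):ℂ) ≠ 0 := by
      intro h0
      rw [hj, h0, zero_div] at hden₁
      exact hden₁ rfl
    rw [hnum, hj, div_div_div_cancel_right₀ hden₂]
  rw [harg, P₁ σ hσ, P₂ τ hτ, hj]
  rw [div_pow]
  rw [div_mul_eq_mul_div, mul_left_comm, mul_div_cancel_left₀ _ (pow_ne_zero 2 hden₂)]


lemma theta_add_two_mul (m : ℤ) (τ : ℂ) : jacobiTheta (τ + 2*m) = jacobiTheta τ := by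
  induction m using Int.induction_on with
  | zero => simp
  | succ n ih =>
    push_cast
    rw [show τ + 2*((n:ℂ)+1) = 2 + (τ + 2*(n:ℂ)) by ring, jacobiTheta_two_add]
    push_cast at ih
    exact ih
  | pred n ih =>
    push_cast
    push_cast at ih
    have h2 := jacobiTheta_two_add (τ + 2*(-(n:ℂ)-1))
    rw [show 2 + (τ + 2*(-(n:ℂ)-1)) = τ + 2*(-(n:ℂ)) by ring] at h2
    rw [← h2]
    exact ih

lemma P_T (m : ℤ) : Pmod 1 (2*m) 0 1 := by
  intro τ hτ
  push_cast
  rw [show ((1:ℂ)*τ + 2*m)/((0:ℂ)*τ+1) = τ + 2*(m:ℂ) by ring]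
  rw [show τ + 2*(m:ℂ) = τ + 2*((m:ℤ):ℂ) by push_cast; ring, theta_add_two_mul]
  ring

lemma P_negT (m : ℤ) : Pmod (-1) (2*m) 0 (-1) := by
  intro τ hτ
  push_cast
  rw [show ((-1:ℂ)*τ + 2*m)/((0:ℂ)*τ+(-1)) = τ + 2*(-(m:ℂ)) by ring]
  rw [show τ + 2*(-(m:ℂ)) = τ + 2*(((-m:ℤ)):ℂ) by push_cast; ring, theta_add_two_mul]
  ring

lemma P_W1 : Pmod 1 0 2 1 := by
  intro τ hτ
  have hτ0 : τ ≠ 0 := by intro h; rw [h] at hτ; simp at hτ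
  set σ : ℂ := -1/τ with hσdef
  have hσ : 0 < σ.im := by
    have := im_moebius 0 (-1) 1 0 (by norm_num) τ hτ
    simpa [hσdef] using this
  have h1 : jacobiTheta σ ^ 4 = -τ^2 * jacobiTheta τ ^ 4 := S4 τ hτ
  have hσ2 : 0 < (σ - 2).im := by
    have : (σ - 2).im = σ.im := by simp [Complex.sub_im]
    rw [this]; exact hσ
  have h2 : jacobiTheta (σ - 2) ^ 4 = jacobiTheta σ ^ 4 := by
    have := theta_add_two_mul (-1) (σ)
    push_cast at this
    rw [show σ + 2*(-1:ℂ) = σ - 2 by ring] at this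
    rw [this]
  have h3 := S4 (σ - 2) hσ2
  have hden : (2:ℂ)*τ + 1 ≠ 0 := by
    have := denom_ne 2 1 (Or.inl (by norm_num)) τ hτ
    push_cast at this; exact this
  have hστ : σ - 2 = -(2*τ+1)/τ := by
    rw [hσdef]; field_simp; ring
  have harg : -1/(σ - 2) = τ / (2*τ + 1) := by
    rw [hστ]; rw [div_div_eq_mul_div]
    rw [div_eq_div_iff (by intro h; apply hden; linear_combination -h) hden]; ring
  have hfac : -(σ - 2)^2 * (-τ^2) = (2*τ+1)^2 := by
    rw [hστ]; field_simp
  push_cast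
  rw [show ((1:ℂ)*τ + 0)/((2:ℂ)*τ+1) = τ/(2*τ+1) by ring]
  rw [← harg, h3, h2, h1]
  rw [show ((2:ℂ)*τ+1)^2 = -(σ-2)^2 * (-τ^2) from hfac.symm]
  ring

lemma P_Wneg1 : Pmod 1 0 (-2) 1 := by
  intro τ hτ
  have hτ0 : τ ≠ 0 := by intro h; rw [h] at hτ; simp at hτ
  set σ : ℂ := -1/τ with hσdef
  have hσ : 0 < σ.im := by
    have := im_moebius 0 (-1) 1 0 (by norm_num) τ hτ
    simpa [hσdef] using this
  have h1 : jacobiTheta σ ^ 4 = -τ^2 * jacobiTheta τ ^ 4 := S4 τ hτ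
  have hσ2 : 0 < (σ + 2).im := by
    have : (σ + 2).im = σ.im := by simp [Complex.add_im]
    rw [this]; exact hσ
  have h2 : jacobiTheta (σ + 2) ^ 4 = jacobiTheta σ ^ 4 := by
    rw [jacobiTheta_two_add σ |>.symm]
    rw [show σ + 2 = 2 + σ by ring]
  have h3 := S4 (σ + 2) hσ2
  have hden : (-2:ℂ)*τ + 1 ≠ 0 := by
    have := denom_ne (-2) 1 (Or.inl (by norm_num)) τ hτ
    push_cast at this; exact this
  have hστ : σ + 2 = -(-2*τ+1)/τ := by
    rw [hσdef]; field_simp; ring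
  have harg : -1/(σ + 2) = τ / (-2*τ + 1) := by
    rw [hστ]; rw [div_div_eq_mul_div]
    rw [div_eq_div_iff (by intro h; apply hden; linear_combination -h) hden]; ring
  have hfac : -(σ + 2)^2 * (-τ^2) = (-2*τ+1)^2 := by
    rw [hστ]; field_simp
  push_cast
  rw [show ((1:ℂ)*τ + 0)/((-2:ℂ)*τ+1) = τ/(-2*τ+1) by ring]
  rw [← harg, h3, h2, h1]
  rw [show ((-2:ℂ)*τ+1)^2 = -(σ+2)^2 * (-τ^2) from hfac.symm]
  ring

lemma P_W (m : ℤ) : Pmod 1 0 (2*m) 1 := by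
  induction m using Int.induction_on with
  | zero => intro τ hτ; norm_num
  | succ n ih =>
    have h2 := Pmul (by norm_num) (by ring) P_W1 ih
    rw [show (1*1+0*(2*(n:ℤ))) = 1 by ring, show ((1:ℤ)*0+0*1) = 0 by ring,
        show (2*1+1*(2*(n:ℤ))) = 2*((n:ℤ)+1) by ring, show ((2:ℤ)*0+1*1) = 1 by ring] at h2
    exact h2
  | pred n ih =>
    have h2 := Pmul (by norm_num) (by ring) P_Wneg1 ih
    rw [show (1*1+0*(2*(-(n:ℤ)))) = 1 by ring, show ((1:ℤ)*0+0*1) = 0 by ring,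
        show (-2*1+1*(2*(-(n:ℤ)))) = 2*(-(n:ℤ)-1) by ring, show ((-2:ℤ)*0+1*1) = 1 by ring] at h2
    exact h2


lemma reduce (c a : ℤ) (hc : c ≠ 0) : ∃ k : ℤ, (a + 2*c*k).natAbs ≤ c.natAbs := by
  set m : ℤ := 2 * c.natAbs with hm
  have hm0 : 0 < m := by
    have : c.natAbs ≠ 0 := Int.natAbs_ne_zero.mpr hc
    omega
  have h1 : a % m + m * (a / m) = a := Int.emod_add_mul_ediv a m
  have h2 : 0 ≤ a % m := Int.emod_nonneg a (by omega)
  have h3 : a % m < m := Int.emod_lt_of_pos a hm0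
  set q : ℤ := a / m with hq
  set r : ℤ := a % m with hr
  rcases Int.natAbs_eq c with hc1 | hc1
  · rcases le_or_gt (2*r) m with h | h
    · refine ⟨-q, ?_⟩
      have e : a + 2*c*(-q) = r := by linear_combination -h1 + q*hm - 2*q*hc1
      rw [e]; omega
    · refine ⟨-(q+1), ?_⟩
      have e : a + 2*c*(-(q+1)) = r - m := by
        linear_combination -h1 + (q+1)*hm - 2*(q+1)*hc1
      rw [e]; omega
  · rcases le_or_gt (2*r) m with h | h
    · refine ⟨q, ?_⟩
      have e : a + 2*c*q = r := by linear_combination -h1 + q*hm + 2*q*hc1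
      rw [e]; omega
    · refine ⟨q+1, ?_⟩
      have e : a + 2*c*(q+1) = r - m := by
        linear_combination -h1 + (q+1)*hm + 2*(q+1)*hc1
      rw [e]; omega

lemma P_all (n : ℕ) : ∀ a b c d : ℤ, c.natAbs = n → a*d-b*c=1 →
    a % 2 = 1 → b % 2 = 0 → c % 2 = 0 → d % 2 = 1 → Pmod a b c d := by
  induction n using Nat.strong_induction_on with
  | _ n ih =>
  intro a b c d hn hdet ha hb hc hd
  by_cases hc0 : c = 0
  · subst hc0
    rw [mul_zero, sub_zero] at hdet
    obtain ⟨mb, hmb⟩ : ∃ mb, b = 2*mb := ⟨b/2, by omega⟩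
    rcases Int.mul_eq_one_iff_eq_one_or_neg_one.mp hdet with ⟨h1, h2⟩ | ⟨h1, h2⟩
    · subst h1; subst h2; subst hmb; exact P_T mb
    · subst h1; subst h2; subst hmb; exact P_negT mb
  · obtain ⟨k, hk⟩ := reduce c a hc0
    set A : ℤ := a + 2*c*k with hA
    have haA : A % 2 = 1 := by
      have h' : (a + 2*(c*k)) % 2 = a % 2 := Int.add_mul_emod_self_left a 2 (c*k)
      rw [hA, show a + 2*c*k = a + 2*(c*k) by ring, h']
      exact ha
    have hA0 : A ≠ 0 := by omega
    have hAc : A.natAbs < c.natAbs := by omega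
    obtain ⟨q, hq⟩ := reduce A c hA0
    set B : ℤ := b + 2*d*k with hB
    set C : ℤ := c + 2*A*q with hC
    set D : ℤ := d + 2*B*q with hD
    have hdet'' : A*D - B*C = 1 := by
      rw [hA, hB, hC, hD, hA, hB]
      linear_combination hdet
    have hBp : B % 2 = 0 := by
      have h' : (b + 2*(d*k)) % 2 = b % 2 := Int.add_mul_emod_self_left b 2 (d*k)
      rw [hB, show b + 2*d*k = b + 2*(d*k) by ring, h']
      exact hb
    have hCp : C % 2 = 0 := by
      have h' : (c + 2*(A*q)) % 2 = c % 2 := Int.add_mul_emod_self_left c 2 (A*q)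
      rw [hC, show c + 2*A*q = c + 2*(A*q) by ring, h']
      exact hc
    have hDp : D % 2 = 1 := by
      have h' : (d + 2*(B*q)) % 2 = d % 2 := Int.add_mul_emod_self_left d 2 (B*q)
      rw [hD, show d + 2*B*q = d + 2*(B*q) by ring, h']
      exact hd
    have hlt : C.natAbs < n := by omega
    have hP'' : Pmod A B C D := ih C.natAbs hlt A B C D rfl hdet'' haA hBp hCp hDp
    -- multiply by W(-q) on the left
    have h1 := Pmul (a₁ := 1) (b₁ := 0) (c₁ := 2*(-q)) (d₁ := 1) (by ring) hdet'' (P_W (-q)) hP''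
    have e1 : (1*A + 0*C) = A := by ring
    have e2 : (1*B + 0*D) = B := by ring
    have e3 : ((2*(-q))*A + 1*C) = c := by rw [hC]; ring
    have e4 : ((2*(-q))*B + 1*D) = d := by rw [hD]; ring
    rw [e1, e2, e3, e4] at h1
    -- multiply by T(-k) on the left
    have hdet1 : A*d - B*c = 1 := by
      rw [hA, hB]; linear_combination hdet
    have h2 := Pmul (a₁ := 1) (b₁ := 2*(-k)) (c₁ := 0) (d₁ := 1) (by ring) hdet1 (P_T (-k)) h1
    have f1 : (1*A + (2*(-k))*c) = a := by rw [hA]; ring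
    have f2 : (1*B + (2*(-k))*d) = b := by rw [hB]; ring
    have f3 : ((0:ℤ)*A + 1*c) = c := by ring
    have f4 : ((0:ℤ)*B + 1*d) = d := by ring
    rw [f1, f2, f3, f4] at h2
    exact h2

lemma theta00_eq (τ : ℂ) : theta00 τ = jacobiTheta τ :=
  tsum_congr fun n => congrArg Complex.exp (by ring)

/-- `ϑ[0,0]⁴` is a modular form of weight 2 with trivial multiplier on `Γ(2)`:
for every matrix `(a b; c d) ∈ SL(2,ℤ)` congruent to the identity mod 2 and every
`τ` in the upper half plane, `ϑ[0,0]((aτ+b)/(cτ+d))⁴ = (cτ+d)² ϑ[0,0](τ)⁴`. -/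
theorem theta00_pow_four_weight_two (a b c d : ℤ) (hdet : a * d - b * c = 1)
    (ha : (a : ZMod 2) = 1) (hb : (b : ZMod 2) = 0) (hc : (c : ZMod 2) = 0)
    (hd : (d : ZMod 2) = 1) (τ : ℂ) (hτ : 0 < τ.im) :
    theta00 (((a : ℂ) * τ + b) / ((c : ℂ) * τ + d)) ^ 4 =
      ((c : ℂ) * τ + d) ^ 2 * theta00 τ ^ 4 := by
  have ha' : a % 2 = 1 := by
    have h := (ZMod.intCast_eq_intCast_iff a 1 2).mp (by simpa using ha)
    have h2 : a % 2 = 1 % 2 := h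
    omega
  have hb' : b % 2 = 0 := by
    have h := (ZMod.intCast_eq_intCast_iff b 0 2).mp (by simpa using hb)
    have h2 : b % 2 = 0 % 2 := h
    omega
  have hc' : c % 2 = 0 := by
    have h := (ZMod.intCast_eq_intCast_iff c 0 2).mp (by simpa using hc)
    have h2 : c % 2 = 0 % 2 := h
    omega
  have hd' : d % 2 = 1 := by
    have h := (ZMod.intCast_eq_intCast_iff d 1 2).mp (by simpa using hd)
    have h2 : d % 2 = 1 % 2 := h
    omega
  have P := P_all c.natAbs a b c d rfl hdet ha' hb' hc' hd'
  rw [theta00_eq, theta00_eq]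
  exact P τ hτ
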